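/- Let M be an n×n skew-symmetric matrix over a field with first row (0, l₁, …, l_{n-1}). If at a point x all 4×4 sub-Pfaffians of M involving the first row and column vanish and some l_i(x) ≠ 0, then M(x) has rank 2, i.e. x lies on the Plücker-embedded Grassmannian Gr(n,2). -/

import Mathlib

/-- **Vanishing of the Pfaffians through the first row forces rank 2 away from the vertex.**
Let `M` be a skew-symmetric `(n+1)×(n+1)` matrix over a field (first row
`(0, l₁, …, l_n)`).  If all `4×4` sub-Pfaffians `P_{0jkl} = M₀ⱼM_{kl} − M₀ₖM_{jl} + M₀ₗM_{jk}`
involving the first row and column vanish and some entry `M₀ᵢ` of the first row is nonzero,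
then `M` has rank `2`, i.e. the corresponding point lies on the Plücker-embedded
Grassmannian `Gr(n+1, 2)` (the rank-`≤2` locus of skew matrices). -/
theorem rank_two_of_pfaffians_first_row (K : Type*) [Field K] (n : ℕ)
    (M : Matrix (Fin (n + 1)) (Fin (n + 1)) K)
    (hskew : M.transpose = -M) (hdiag : ∀ i, M i i = 0)
    (hpf : ∀ j k l : Fin (n + 1),
      M 0 j * M k l - M 0 k * M j l + M 0 l * M j k = 0)
    (hx : ∃ i, M 0 i ≠ 0) :
    M.rank = 2 := by
  obtain ⟨j, hj⟩ := hx
  set c := M 0 j with hc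
  have hskew' : ∀ a b, M b a = - M a b := by
    intro a b
    have := congrFun (congrFun hskew a) b
    simpa [Matrix.transpose_apply] using this
  -- upper bound
  have hub : M.rank ≤ 2 := by
    set A : Matrix (Fin (n+1)) (Fin 2) K :=
      Matrix.of fun k t => if t = 0 then M 0 k * c⁻¹ else M j k with hA
    set B : Matrix (Fin 2) (Fin (n+1)) K :=
      Matrix.of fun t l => if t = 0 then M j l else -(M 0 l * c⁻¹) with hB
    have hM : M = A * B := by
      ext k l
      simp only [hA, hB, Matrix.mul_apply, Fin.sum_univ_two, Matrix.of_apply]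
      norm_num
      field_simp
      linear_combination hpf j k l
    calc M.rank = (A * B).rank := by rw [hM]
      _ ≤ A.rank := le_trans (Matrix.rank_mul_le A B) (min_le_left _ _)
      _ ≤ 2 := by simpa using A.rank_le_card_width
  -- lower bound
  have hlb : 2 ≤ M.rank := by
    set f : Fin 2 → Fin (n+1) := ![0, j] with hf
    set P : Matrix (Fin 2) (Fin (n+1)) K := (1 : Matrix (Fin (n+1)) (Fin (n+1)) K).submatrix f id
    set Q : Matrix (Fin (n+1)) (Fin 2) K := (1 : Matrix (Fin (n+1)) (Fin (n+1)) K).submatrix id f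
    have hsub : P * M * Q = M.submatrix f f := by
      ext a b
      simp [P, Q, Matrix.mul_apply, Matrix.one_apply, Finset.sum_ite_eq, Finset.sum_ite_eq']
    have hjj0 : (0 : Fin (n+1)) ≠ j := by
      rintro rfl; exact hj (hdiag 0)
    have hdet : (M.submatrix f f).det ≠ 0 := by
      have : (M.submatrix f f).det = c * c := by
        rw [Matrix.det_fin_two]
        simp [hf, Matrix.submatrix_apply, hdiag, hskew' 0 j]
        rfl
      rw [this]
      exact mul_ne_zero hj hj
    have hrk : (M.submatrix f f).rank = 2 := by
      have := Matrix.rank_of_isUnit (M.submatrix f f)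
        ((Matrix.isUnit_iff_isUnit_det _).mpr (Ne.isUnit hdet))
      simpa using this
    calc (2 : ℕ) = (M.submatrix f f).rank := hrk.symm
      _ = (P * M * Q).rank := by rw [hsub]
      _ ≤ (P * M).rank := le_trans (Matrix.rank_mul_le _ _) (min_le_left _ _)
      _ ≤ M.rank := le_trans (Matrix.rank_mul_le _ _) (min_le_right _ _)
  omega
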